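/- Let R be a finite ring with unity, let I be a left ideal of R, and suppose M_R(I) is a minimal subset of itself (i.e., no proper subset E ⊊ M_R(I) satisfies ⋂_{M∈E} M = ⋂_{M∈M_R(I)} M). Then for any disjoint subsets M_1, M_2 of M_R(I) and any E_1 ⊆ M_1 and E_2 ⊆ M_2, one has |I| / |⋂_{M ∈ E_1 ∪ E_2} M| = (|I| / |⋂_{M∈E_1} M|) · (|I| / |⋂_{M∈E_2} M|). -/

import Mathlib

open scoped BigOperators
open Classical

variable {R : Type*}

/-- The left ideal of `R` generated by `x`, i.e. `(x)_ℓ`. -/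
def lgen [Ring R] (x : R) : Submodule R R := Submodule.span R {x}

/-- `[x]_ℓ = {y : (y)_ℓ = (x)_ℓ}`. -/
def classL [Ring R] (x : R) : Set R := {y | lgen y = lgen x}

/-- The character sum `C_χ(x) = ∑_{s ∈ [x]_ℓ} χ(s)`. -/
noncomputable def CchiL [Ring R] (χ : AddChar R ℂ) (x : R) : ℂ :=
  ∑ᶠ s ∈ classL x, χ s

/-- The set `M_R(J)` of maximal `R`-left ideals of `J`. -/
def maxROf [Ring R] (J : Submodule R R) : Set (Submodule R R) :=
  {M | M < J ∧ ∀ I' : Submodule R R, M < I' → ¬ I' < J}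

/-- The set `M_R(J, K)` of maximal `R`-left ideals of `J` containing `K`. -/
def maxROfAbove [Ring R] (J K : Submodule R R) : Set (Submodule R R) :=
  {M | M ∈ maxROf J ∧ K ≤ M}

/-- Intersection of the family `E` of left ideals, with the convention that the
empty intersection is `J`. -/
noncomputable def interIn [Ring R] (J : Submodule R R) (E : Set (Submodule R R)) :
    Submodule R R :=
  if E = ∅ then J else sInf E

/-- The Möbius function `μ_R(I, J)` on left ideals of `R`. -/
noncomputable def muR [Ring R] (I J : Submodule R R) : ℤ :=
  if I = J then 1
  else if I < J ∧ ∃ E : Set (Submodule R R),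
      E ⊆ maxROf J ∧ E.Nonempty ∧ interIn J E = I then
    (Nat.card {E : Set (Submodule R R) //
        E ⊆ maxROf J ∧ interIn J E = I ∧ Even (Nat.card E)} : ℤ)
      - (Nat.card {E : Set (Submodule R R) //
        E ⊆ maxROf J ∧ interIn J E = I ∧ Odd (Nat.card E)} : ℤ)
  else 0

/-- The function `φ_R(I, J)` on left ideals of `R`. -/
noncomputable def phiR [Ring R] (I J : Submodule R R) : ℂ :=
  if I = J then 1
  else if I < J ∧ ∃ E : Set (Submodule R R),
      E ⊆ maxROf J ∧ E.Nonempty ∧ interIn J E = I then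
    ∏ᶠ M ∈ maxROfAbove J I, ((Nat.card J : ℂ) / (Nat.card M : ℂ) - 1)
  else 1


section aux
variable [Ring R] [Fintype R]

lemma relindex_card_aux {G : Type*} [AddCommGroup G] [Finite G] (A B : AddSubgroup G) :
    A.relIndex B * Nat.card (A ⊓ B : AddSubgroup G) = Nat.card B := by
  rw [← AddSubgroup.inf_relIndex_right, AddSubgroup.relIndex,
    mul_comm, Nat.card_congr (AddSubgroup.addSubgroupOfEquivOfLe (inf_le_right : A ⊓ B ≤ B)).symm.toEquiv]
  exact AddSubgroup.card_mul_index _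

lemma card_inf_mul (p q r : Submodule R R) (hsup : p ⊔ q = r) :
    Nat.card r * Nat.card (p ⊓ q : Submodule R R) = Nat.card p * Nat.card q := by
  have hA : p.toAddSubgroup ⊔ q.toAddSubgroup = r.toAddSubgroup := by
    apply le_antisymm
    · exact sup_le ((Submodule.toAddSubgroup_le _ _).2 (hsup ▸ le_sup_left))
        ((Submodule.toAddSubgroup_le _ _).2 (hsup ▸ le_sup_right))
    · intro x hx
      have : x ∈ p ⊔ q := hsup ▸ hx
      obtain ⟨y, hy, z, hz, rfl⟩ := Submodule.mem_sup.1 this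
      exact add_mem (AddSubgroup.mem_sup_left hy) (AddSubgroup.mem_sup_right hz)
  have h1 := relindex_card_aux p.toAddSubgroup q.toAddSubgroup
  have h2 := relindex_card_aux p.toAddSubgroup r.toAddSubgroup
  have hpr : p.toAddSubgroup ⊓ r.toAddSubgroup = p.toAddSubgroup :=
    inf_eq_left.2 ((Submodule.toAddSubgroup_le _ _).2 (hsup ▸ le_sup_left))
  have hrel : p.toAddSubgroup.relIndex q.toAddSubgroup
      = p.toAddSubgroup.relIndex r.toAddSubgroup := by
    rw [← hA, AddSubgroup.relIndex_sup_left]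
  have hcr : Nat.card r = Nat.card r.toAddSubgroup := rfl
  have hcp : Nat.card p = Nat.card p.toAddSubgroup := rfl
  have hcq : Nat.card q = Nat.card q.toAddSubgroup := rfl
  have hcpq : Nat.card (p ⊓ q : Submodule R R)
      = Nat.card (p.toAddSubgroup ⊓ q.toAddSubgroup : AddSubgroup R) := rfl
  rw [hpr] at h2
  rw [hcr, hcp, hcq, hcpq, ← h1, ← h2, hrel]
  ring

end aux

section main
variable [Ring R] [Fintype R] (I : Submodule R R)

lemma interIn_le {E : Set (Submodule R R)} (hE : E ⊆ maxROf I) :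
    interIn I E ≤ I := by
  unfold interIn
  split
  · exact le_rfl
  · next h =>
    obtain ⟨M, hM⟩ := Set.nonempty_iff_ne_empty.2 h
    exact le_trans (sInf_le hM) (hE hM).1.le

lemma interIn_anti {E F : Set (Submodule R R)} (hEF : E ⊆ F) (hF : F ⊆ maxROf I) :
    interIn I F ≤ interIn I E := by
  by_cases hE : E = ∅
  · rw [hE]; simpa [interIn] using interIn_le I hF
  · have hFne : F ≠ ∅ := fun h => hE (Set.subset_eq_empty hEF h)
    simp only [interIn, hE, hFne, if_neg]
    exact le_sInf fun M hM => sInf_le (hEF hM)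

lemma interIn_insert {E : Set (Submodule R R)} {M : Submodule R R} (hM : M ≤ I) :
    interIn I (insert M E) = M ⊓ interIn I E := by
  by_cases hE : E = ∅
  · subst hE
    simp [interIn, inf_eq_left.2 hM]
  · have h1 : insert M E ≠ ∅ := (Set.insert_nonempty M E).ne_empty
    simp [interIn, hE, h1, sInf_insert]

lemma interIn_not_le
    (hmin : ∀ E : Set (Submodule R R), E ⊂ maxROf I →
      interIn I E ≠ interIn I (maxROf I))
    {E : Set (Submodule R R)} (hE : E ⊆ maxROf I) {M : Submodule R R}
    (hM : M ∈ maxROf I) (hME : M ∉ E) : ¬ interIn I E ≤ M := by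
  intro hle
  set E' := maxROf I \ {M} with hE'
  have hsub : E' ⊂ maxROf I := by
    constructor
    · exact Set.diff_subset
    · intro h
      exact (h hM).2 rfl
  have hEE' : E ⊆ E' := fun N hN => ⟨hE hN, fun h => hME (h ▸ hN)⟩
  have hle' : interIn I E' ≤ M :=
    le_trans (interIn_anti I hEE' Set.diff_subset) hle
  have hins : maxROf I = insert M E' := by
    rw [hE', Set.insert_diff_singleton, Set.insert_eq_self.2 hM]
  apply hmin E' hsub
  rw [hins, interIn_insert I hM.1.le, inf_eq_right.2 hle']

lemma card_step
    (hmin : ∀ E : Set (Submodule R R), E ⊂ maxROf I →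
      interIn I E ≠ interIn I (maxROf I))
    {E : Set (Submodule R R)} (hE : E ⊆ maxROf I) {M : Submodule R R}
    (hM : M ∈ maxROf I) (hME : M ∉ E) :
    Nat.card I * Nat.card (interIn I (insert M E)) =
      Nat.card M * Nat.card (interIn I E) := by
  have hnle := interIn_not_le I hmin hE hM hME
  have hsup : M ⊔ interIn I E = I := by
    rcases lt_or_eq_of_le (sup_le hM.1.le (interIn_le I hE)) with h | h
    · exact absurd h (hM.2 _ (lt_of_le_of_ne le_sup_left
        (fun h' => hnle (h' ▸ le_sup_right))))
    · exact h
  rw [interIn_insert I hM.1.le]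
  exact card_inf_mul M (interIn I E) I hsup

lemma card_ne_zero (p : Submodule R R) : (Nat.card p : ℚ) ≠ 0 := by
  have : 0 < Nat.card p := Nat.card_pos
  exact_mod_cast this.ne'

lemma card_prod
    (hmin : ∀ E : Set (Submodule R R), E ⊂ maxROf I →
      interIn I E ≠ interIn I (maxROf I)) :
    ∀ s : Finset (Submodule R R), (↑s : Set (Submodule R R)) ⊆ maxROf I →
      (Nat.card I : ℚ) / (Nat.card (interIn I ↑s) : ℚ) =
        ∏ M ∈ s, ((Nat.card I : ℚ) / (Nat.card M : ℚ)) := by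
  intro s
  induction s using Finset.induction_on with
  | empty => intro _; simp [interIn]
  | insert M s hms ih =>
    intro hsub
    have hM : M ∈ maxROf I := hsub (by simp)
    have hs : (↑s : Set (Submodule R R)) ⊆ maxROf I :=
      fun N hN => hsub (by simp [hN])
    have key := card_step I hmin hs hM (by simpa using hms)
    have hc : (↑(insert M s) : Set (Submodule R R)) = insert M ↑s := by simp
    rw [Finset.prod_insert hms, ← ih hs, hc]
    have h1 := card_ne_zero I
    have h2 := card_ne_zero M
    have h3 := card_ne_zero (interIn I (insert M (↑s : Set (Submodule R R))))
    have h4 := card_ne_zero (interIn I (↑s : Set (Submodule R R)))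
    have key' : (Nat.card I : ℚ) * Nat.card (interIn I (insert M (↑s : Set (Submodule R R)))) =
        Nat.card M * Nat.card (interIn I (↑s : Set (Submodule R R))) := by exact_mod_cast key
    rw [div_mul_div_comm, div_eq_div_iff h3 (mul_ne_zero h2 h4)]
    linear_combination (-(Nat.card I : ℚ)) * key'

end main

theorem stmt13 [Ring R] [Fintype R] (I : Submodule R R)
    (hmin : ∀ E : Set (Submodule R R), E ⊂ maxROf I →
      interIn I E ≠ interIn I (maxROf I))
    (M1 M2 : Set (Submodule R R)) (hM1 : M1 ⊆ maxROf I) (hM2 : M2 ⊆ maxROf I)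
    (hdisj : Disjoint M1 M2)
    (E1 E2 : Set (Submodule R R)) (hE1 : E1 ⊆ M1) (hE2 : E2 ⊆ M2) :
    (Nat.card I : ℚ) / (Nat.card (interIn I (E1 ∪ E2)) : ℚ) =
      ((Nat.card I : ℚ) / (Nat.card (interIn I E1) : ℚ)) *
        ((Nat.card I : ℚ) / (Nat.card (interIn I E2) : ℚ)) := by
  haveI : Finite (Submodule R R) :=
    Finite.of_injective (SetLike.coe : Submodule R R → Set R) SetLike.coe_injective
  have h1 : E1.Finite := Set.toFinite E1
  have h2 : E2.Finite := Set.toFinite E2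
  have hE1' : E1 ⊆ maxROf I := hE1.trans hM1
  have hE2' : E2 ⊆ maxROf I := hE2.trans hM2
  have hd : Disjoint E1 E2 := hdisj.mono hE1 hE2
  have hdf : Disjoint h1.toFinset h2.toFinset := by
    rw [Finset.disjoint_left]
    intro a ha hb
    rw [Set.Finite.mem_toFinset] at ha hb
    exact Set.disjoint_left.1 hd ha hb
  have c1 := card_prod I hmin h1.toFinset (by simpa using hE1')
  have c2 := card_prod I hmin h2.toFinset (by simpa using hE2')
  have c3 := card_prod I hmin (h1.toFinset ∪ h2.toFinset) (by
    simp only [Finset.coe_union, Set.Finite.coe_toFinset]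
    exact Set.union_subset hE1' hE2')
  rw [Set.Finite.coe_toFinset] at c1
  rw [Set.Finite.coe_toFinset] at c2
  rw [Finset.coe_union, Set.Finite.coe_toFinset, Set.Finite.coe_toFinset] at c3
  rw [c1, c2, c3, Finset.prod_union hdf]
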